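/- Let QT = [Q, L, c] be a positive quadratic triple of n variables, written in block form with Q = [[Q', p'],[p'ᵗ, r']] and L = [[L'],[m']] where Q' has size n−1. Define pr(QT) := [Q' − (1/r')·p'p'ᵗ, L' − (m'/r')·p', c − m'²/r']. Then pr(QT) is a positive quadratic triple of n−1 variables, and for every t ∈ R the image of {x ∈ Rⁿ : q_QT(x) ≤ t} under the projection (x₁,…,xₙ) ↦ (x₁,…,xₙ₋₁) equals {y ∈ Rⁿ⁻¹ : q_{pr(QT)}(y) ≤ t}. -/

import Mathlib

noncomputable section

open Matrix

/-- The real inhomogeneous quadratic function `q(x) = x Q xᵗ + 2 x L + c`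
associated with a rational quadratic triple `[Q, L, c]`. -/
def quadFun {n : ℕ} (Q : Matrix (Fin n) (Fin n) ℚ) (L : Fin n → ℚ) (c : ℚ)
    (x : Fin n → ℝ) : ℝ :=
  x ⬝ᵥ (Q.map (fun a => (a : ℝ))).mulVec x + 2 * (x ⬝ᵥ fun i => (L i : ℝ)) + c

lemma aux_expand {α : Type*} [Field α] {n : ℕ} (M : Matrix (Fin (n+1)) (Fin (n+1)) α)
    (y : Fin n → α) (s : α) :
    (Fin.snoc y s) ⬝ᵥ M.mulVec (Fin.snoc y s)
      = (∑ i, y i * ∑ j, M i.castSucc j.castSucc * y j)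
        + s * (∑ i, y i * M i.castSucc (Fin.last n))
        + s * (∑ j, M (Fin.last n) j.castSucc * y j)
        + s * M (Fin.last n) (Fin.last n) * s := by
  simp only [dotProduct, mulVec, Fin.sum_univ_castSucc, Fin.snoc_castSucc, Fin.snoc_last,
    mul_add, add_mul, Finset.mul_sum, Finset.sum_mul, Finset.sum_add_distrib]
  ring_nf

lemma aux_dot {α : Type*} [Field α] {n : ℕ} (y : Fin n → α) (s : α) (L : Fin (n+1) → α) :
    (Fin.snoc y s) ⬝ᵥ L = (∑ i, y i * L i.castSucc) + s * L (Fin.last n) := by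
  simp [dotProduct, Fin.sum_univ_castSucc]

lemma aux_sq {n : ℕ} {α : Type*} [Field α] (p' : Fin n → α) (r' : α) (y : Fin n → α) :
    ∑ i, y i * ∑ j, (p' i * p' j / r') * y j = (∑ i, y i * p' i) * (∑ i, y i * p' i) / r' := by
  calc ∑ i, y i * ∑ j, (p' i * p' j / r') * y j
      = ∑ i, (y i * p' i / r') * ∑ j, y j * p' j := by
        refine Finset.sum_congr rfl fun i _ => ?_
        rw [Finset.mul_sum, Finset.mul_sum]
        exact Finset.sum_congr rfl fun j _ => by ring
    _ = (∑ i, y i * p' i / r') * ∑ j, y j * p' j := by rw [Finset.sum_mul]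
    _ = (∑ i, y i * p' i) * (∑ i, y i * p' i) / r' := by
        rw [← Finset.sum_div]; ring

/-- Key algebraic decomposition lemma. -/
lemma aux_key {α : Type*} [Field α] {n : ℕ} (A : Matrix (Fin (n+1)) (Fin (n+1)) α)
    (l : Fin (n+1) → α) (c : α)
    (hsymA : ∀ i : Fin n, A (Fin.last n) i.castSucc = A i.castSucc (Fin.last n))
    (hr : A (Fin.last n) (Fin.last n) ≠ 0) (y : Fin n → α) (s : α) :
    (Fin.snoc y s) ⬝ᵥ A.mulVec (Fin.snoc y s) + 2 * ((Fin.snoc y s) ⬝ᵥ l) + c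
      = (y ⬝ᵥ (Matrix.of fun i j : Fin n =>
            A i.castSucc j.castSucc
              - A i.castSucc (Fin.last n) * A j.castSucc (Fin.last n)
                / A (Fin.last n) (Fin.last n)).mulVec y
          + 2 * (y ⬝ᵥ fun i => l i.castSucc
              - (l (Fin.last n) / A (Fin.last n) (Fin.last n)) * A i.castSucc (Fin.last n))
          + (c - (l (Fin.last n)) ^ 2 / A (Fin.last n) (Fin.last n)))
        + A (Fin.last n) (Fin.last n)
          * (s + ((∑ i, y i * A i.castSucc (Fin.last n)) + l (Fin.last n))
              / A (Fin.last n) (Fin.last n)) ^ 2 := by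
  set r' := A (Fin.last n) (Fin.last n) with hr'
  set p' : Fin n → α := fun i => A i.castSucc (Fin.last n) with hp'
  set P := ∑ i, y i * p' i with hP
  set S1 := ∑ i, y i * ∑ j, A i.castSucc j.castSucc * y j with hS1
  set m' := l (Fin.last n) with hm'
  set Ls := ∑ i, y i * l i.castSucc with hLs
  have e1 : (Fin.snoc y s) ⬝ᵥ A.mulVec (Fin.snoc y s)
      = S1 + s * P + s * P + s * r' * s := by
    rw [aux_expand]
    have : ∑ j, A (Fin.last n) j.castSucc * y j = P := by
      rw [hP]; exact Finset.sum_congr rfl fun j _ => by rw [hsymA j]; ring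
    rw [this]
  have e2 : (Fin.snoc y s) ⬝ᵥ l = Ls + s * m' := aux_dot y s l
  have e3 : y ⬝ᵥ (Matrix.of fun i j : Fin n =>
        A i.castSucc j.castSucc - p' i * p' j / r').mulVec y
      = S1 - P * P / r' := by
    simp only [dotProduct, mulVec, of_apply]
    have : ∀ i : Fin n, ∑ j, (A i.castSucc j.castSucc - p' i * p' j / r') * y j
        = (∑ j, A i.castSucc j.castSucc * y j) - ∑ j, (p' i * p' j / r') * y j := by
      intro i
      rw [← Finset.sum_sub_distrib]
      exact Finset.sum_congr rfl fun j _ => by ring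
    simp only [this, mul_sub, Finset.sum_sub_distrib]
    rw [aux_sq p' r' y, ← hP, ← hS1]
  have e4 : (y ⬝ᵥ fun i => l i.castSucc - (m' / r') * p' i) = Ls - (m' / r') * P := by
    simp only [dotProduct, mul_sub, Finset.sum_sub_distrib, ← hLs]
    congr 1
    rw [hP, Finset.mul_sum]
    exact Finset.sum_congr rfl fun i _ => by ring
  rw [e1, e2, e3, e4]
  field_simp
  ring

/-- Projection of a positive quadratic triple: with the block decomposition
`Q = [[Q', p'],[p'ᵗ, r']]`, `L = [[L'],[m']]` (last row/column split off),
`pr(QT) = [Q' − p'p'ᵗ/r', L' − (m'/r')p', c − m'²/r']` is again a positive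
quadratic triple, and for every `t ∈ ℝ` the image of the sublevel set
`{x : q_QT(x) ≤ t}` under the projection forgetting the last coordinate is
exactly the sublevel set `{y : q_pr(QT)(y) ≤ t}`. -/
theorem stmt_10 {n : ℕ} (Q : Matrix (Fin (n+1)) (Fin (n+1)) ℚ)
    (L : Fin (n+1) → ℚ) (c : ℚ)
    (hsymm : Q.IsSymm)
    (hpos : ∀ v : Fin (n+1) → ℚ, v ≠ 0 → 0 < v ⬝ᵥ Q.mulVec v)
    (p' : Fin n → ℚ) (hp' : p' = fun i => Q i.castSucc (Fin.last n))
    (r' : ℚ) (hr' : r' = Q (Fin.last n) (Fin.last n))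
    (m' : ℚ) (hm' : m' = L (Fin.last n))
    (prQ : Matrix (Fin n) (Fin n) ℚ)
    (hprQ : prQ = Matrix.of fun i j => Q i.castSucc j.castSucc - p' i * p' j / r')
    (prL : Fin n → ℚ) (hprL : prL = fun i => L i.castSucc - (m' / r') * p' i)
    (prc : ℚ) (hprc : prc = c - m' ^ 2 / r') :
    prQ.IsSymm ∧
    (∀ v : Fin n → ℚ, v ≠ 0 → 0 < v ⬝ᵥ prQ.mulVec v) ∧
    (∀ t : ℝ,
      (fun x : Fin (n+1) → ℝ => x ∘ Fin.castSucc) '' {x | quadFun Q L c x ≤ t}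
        = {y | quadFun prQ prL prc y ≤ t}) := by
  subst hp' hr' hm' hprQ hprL hprc
  have hrpos : 0 < Q (Fin.last n) (Fin.last n) := by
    have h := hpos (Pi.single (Fin.last n) 1) (by
      intro h
      have := congrFun h (Fin.last n)
      simp at this)
    simpa [dotProduct, mulVec, Pi.single_apply, Finset.mul_sum] using h
  have hrne : Q (Fin.last n) (Fin.last n) ≠ 0 := ne_of_gt hrpos
  have hsa : ∀ i : Fin n, Q (Fin.last n) i.castSucc = Q i.castSucc (Fin.last n) :=
    fun i => hsymm.apply _ _
  refine ⟨?_, ?_, ?_⟩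
  · -- symmetry
    rw [Matrix.IsSymm]
    ext i j
    simp only [transpose_apply, of_apply]
    rw [hsymm.apply, mul_comm]
  · -- positivity
    intro v hv
    have hkey := aux_key Q (0 : Fin (n+1) → ℚ) 0 hsa hrne v
      (-((∑ i, v i * Q i.castSucc (Fin.last n)) + (0 : Fin (n+1) → ℚ) (Fin.last n))
        / Q (Fin.last n) (Fin.last n))
    set s : ℚ := -((∑ i, v i * Q i.castSucc (Fin.last n)) + (0 : Fin (n+1) → ℚ) (Fin.last n))
        / Q (Fin.last n) (Fin.last n) with hs
    have hw : (Fin.snoc v s : Fin (n+1) → ℚ) ≠ 0 := by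
      intro h
      apply hv
      funext i
      have := congrFun h i.castSucc
      simpa [Fin.snoc_castSucc] using this
    have hsq : s + ((∑ i, v i * Q i.castSucc (Fin.last n)) + (0 : Fin (n+1) → ℚ) (Fin.last n))
        / Q (Fin.last n) (Fin.last n) = 0 := by
      rw [hs]; ring
    rw [hsq] at hkey
    simp only [Pi.zero_apply, dotProduct_zero, mul_zero, add_zero, zero_pow, ne_eq,
      OfNat.ofNat_ne_zero, not_false_eq_true, zero_div, sub_zero, zero_sub] at hkey
    have h0 := hpos _ hw
    rw [hkey] at h0
    simpa using h0
  · -- image of sublevel sets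
    intro t
    have hrneR : ((Q (Fin.last n) (Fin.last n) : ℚ) : ℝ) ≠ 0 := by
      exact_mod_cast hrne
    have hrposR : (0:ℝ) < ((Q (Fin.last n) (Fin.last n) : ℚ) : ℝ) := by
      exact_mod_cast hrpos
    set A : Matrix (Fin (n+1)) (Fin (n+1)) ℝ := Q.map (fun a => (a : ℝ)) with hA
    have hsaR : ∀ i : Fin n, A (Fin.last n) i.castSucc = A i.castSucc (Fin.last n) := by
      intro i; simp [hA, hsa i]
    have hArr : A (Fin.last n) (Fin.last n) = ((Q (Fin.last n) (Fin.last n) : ℚ) : ℝ) := rfl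
    have keyR : ∀ (y : Fin n → ℝ) (s : ℝ),
        quadFun Q L c (Fin.snoc y s)
          = quadFun
              (Matrix.of fun i j : Fin n => Q i.castSucc j.castSucc
                - (fun i => Q i.castSucc (Fin.last n)) i * (fun i => Q i.castSucc (Fin.last n)) j
                  / Q (Fin.last n) (Fin.last n))
              (fun i => L i.castSucc - L (Fin.last n) / Q (Fin.last n) (Fin.last n)
                * (fun i => Q i.castSucc (Fin.last n)) i)
              (c - L (Fin.last n) ^ 2 / Q (Fin.last n) (Fin.last n)) y
            + ((Q (Fin.last n) (Fin.last n) : ℚ) : ℝ)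
              * (s + ((∑ i, y i * ((Q i.castSucc (Fin.last n) : ℚ) : ℝ))
                  + ((L (Fin.last n) : ℚ) : ℝ)) / ((Q (Fin.last n) (Fin.last n) : ℚ) : ℝ)) ^ 2 := by
      intro y s
      have h := aux_key A (fun i => ((L i : ℚ) : ℝ)) ((c : ℚ) : ℝ) hsaR
        (by rw [hArr]; exact hrneR) y s
      have hm1 : (Matrix.of fun i j : Fin n => Q i.castSucc j.castSucc
            - (fun i => Q i.castSucc (Fin.last n)) i * (fun i => Q i.castSucc (Fin.last n)) j
              / Q (Fin.last n) (Fin.last n)).map (fun a => (a : ℝ))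
          = Matrix.of fun i j : Fin n =>
              A i.castSucc j.castSucc
                - A i.castSucc (Fin.last n) * A j.castSucc (Fin.last n)
                  / A (Fin.last n) (Fin.last n) := by
        ext i j
        simp only [hA, Matrix.map_apply, Matrix.of_apply]
        push_cast
        ring
      have hm2 : (fun i : Fin n => ((L i.castSucc - L (Fin.last n) / Q (Fin.last n) (Fin.last n)
            * (fun i => Q i.castSucc (Fin.last n)) i : ℚ) : ℝ))
          = fun i : Fin n => ((L i.castSucc : ℚ) : ℝ)
              - (((L (Fin.last n) : ℚ) : ℝ) / A (Fin.last n) (Fin.last n))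
                * A i.castSucc (Fin.last n) := by
        funext i
        simp only [hA, Matrix.map_apply]
        push_cast
        ring
      rw [quadFun, quadFun, hm1, hm2]
      rw [show ((c - L (Fin.last n) ^ 2 / Q (Fin.last n) (Fin.last n) : ℚ) : ℝ)
          = ((c:ℚ):ℝ) - (((L (Fin.last n) : ℚ):ℝ)) ^ 2 / A (Fin.last n) (Fin.last n) by
        rw [hArr]; push_cast; ring]
      rw [h, hArr]
      norm_num [hA, Matrix.map_apply]
    ext z
    simp only [Set.mem_image, Set.mem_setOf_eq]
    constructor
    · rintro ⟨x, hx, rfl⟩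
      have hxs : x = Fin.snoc (x ∘ Fin.castSucc) (x (Fin.last n)) := by
        funext i
        exact (congrFun (Fin.snoc_init_self x) i).symm
      rw [hxs] at hx
      rw [keyR] at hx
      have hsq : (0:ℝ) ≤ ((Q (Fin.last n) (Fin.last n) : ℚ) : ℝ)
          * (x (Fin.last n) + ((∑ i, (x ∘ Fin.castSucc) i * ((Q i.castSucc (Fin.last n) : ℚ) : ℝ))
              + ((L (Fin.last n) : ℚ) : ℝ)) / ((Q (Fin.last n) (Fin.last n) : ℚ) : ℝ)) ^ 2 :=
        mul_nonneg (le_of_lt hrposR) (sq_nonneg _)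
      linarith
    · intro hz
      refine ⟨Fin.snoc z (-(((∑ i, z i * ((Q i.castSucc (Fin.last n) : ℚ) : ℝ))
          + ((L (Fin.last n) : ℚ) : ℝ)) / ((Q (Fin.last n) (Fin.last n) : ℚ) : ℝ))), ?_, ?_⟩
      · rw [keyR]
        have : (-(((∑ i, z i * ((Q i.castSucc (Fin.last n) : ℚ) : ℝ))
              + ((L (Fin.last n) : ℚ) : ℝ)) / ((Q (Fin.last n) (Fin.last n) : ℚ) : ℝ))
            + ((∑ i, z i * ((Q i.castSucc (Fin.last n) : ℚ) : ℝ))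
              + ((L (Fin.last n) : ℚ) : ℝ)) / ((Q (Fin.last n) (Fin.last n) : ℚ) : ℝ)) = 0 := by
          ring
        rw [this]
        simpa using hz
      · funext i
        simp [Fin.snoc_castSucc]
end
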